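/- Let K_n be the complete graph on vertex set [n] = {1,...,n} and G' a subgraph of K_n, with edge ideals J = I(G') and I = I(K_n) in K[x_1,...,x_n] over a field K. Then J ∩ I^t = J·I^{t-1} for all t ≥ 1 if and only if for every edge {i,j} of G' one has N_{G'}(i) ∪ N_{G'}(j) = [n]. -/

import Mathlib

/-- The edge ideal of a finite simple graph on `[n]`: the ideal of `K[x_1,…,x_n]`
generated by the monomials `x_i x_j` with `{i,j}` an edge of `G`. -/
noncomputable def edgeIdeal (K : Type) [Field K] {n : ℕ} (G : SimpleGraph (Fin n)) :
    Ideal (MvPolynomial (Fin n) K) :=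
  Ideal.span {p | ∃ i j : Fin n, G.Adj i j ∧ p = MvPolynomial.X i * MvPolynomial.X j}

open MvPolynomial Finsupp Pointwise

variable {n : ℕ}

noncomputable def edgeVec (i j : Fin n) : Fin n →₀ ℕ := Finsupp.single i 1 + Finsupp.single j 1

lemma edgeVec_comm (i j : Fin n) : edgeVec i j = edgeVec j i := add_comm _ _

lemma edgeVec_apply (i j v : Fin n) :
    edgeVec i j v = (if i = v then 1 else 0) + (if j = v then 1 else 0) := by
  simp [edgeVec, Finsupp.single_apply]

def IsESum : ℕ → (Fin n →₀ ℕ) → Prop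
  | 0, e => e = 0
  | (t+1), e => ∃ i j f, i ≠ j ∧ IsESum t f ∧ e = edgeVec i j + f

lemma edgeVec_apply_ne {i j v : Fin n} (hi : i ≠ v) (hj : j ≠ v) : edgeVec i j v = 0 := by
  rw [edgeVec_apply, if_neg hi, if_neg hj]

lemma extract : ∀ (t : ℕ) (e : Fin n →₀ ℕ), IsESum (t+1) e → ∀ i, 1 ≤ e i →
    ∃ c f, c ≠ i ∧ IsESum t f ∧ e = edgeVec i c + f := by
  intro t
  induction t with
  | zero =>
    rintro e ⟨a, b, f, hab, (rfl : f = 0), rfl⟩ i hi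
    rw [add_zero] at hi ⊢
    rcases eq_or_ne a i with rfl | ha
    · exact ⟨b, 0, fun h => hab h.symm, rfl, (add_zero _).symm⟩
    · rcases eq_or_ne b i with rfl | hb
      · exact ⟨a, 0, fun h => hab (h ▸ rfl), rfl, by rw [edgeVec_comm, add_zero]⟩
      · rw [edgeVec_apply_ne ha hb] at hi; omega
  | succ s ih =>
    rintro e ⟨a, b, f, hab, hf, rfl⟩ i hi
    rcases eq_or_ne a i with rfl | ha
    · exact ⟨b, f, fun h => hab h.symm, hf, rfl⟩
    · rcases eq_or_ne b i with rfl | hb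
      · exact ⟨a, f, fun h => hab h, hf, by rw [edgeVec_comm]⟩
      · have hfi : 1 ≤ f i := by
          rw [Finsupp.add_apply, edgeVec_apply_ne ha hb] at hi; omega
        obtain ⟨c, g, hc, hg, rfl⟩ := ih f hf i hfi
        exact ⟨c, edgeVec a b + g, hc, ⟨a, b, g, hab, hg, rfl⟩, by
          rw [← add_assoc, ← add_assoc, add_comm (edgeVec a b) (edgeVec i c)]⟩

lemma tail {t : ℕ} {e : Fin n →₀ ℕ} (h : IsESum (t+1) e) : ∃ f, IsESum t f ∧ f ≤ e := by
  obtain ⟨a, b, f, _, hf, rfl⟩ := h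
  exact ⟨f, hf, le_add_self⟩

lemma IsESum_nonzero_level {t : ℕ} {e : Fin n →₀ ℕ} {v : Fin n} (h : IsESum t e)
    (hv : 1 ≤ e v) : ∃ s, t = s + 1 := by
  cases t with
  | zero => rw [(h : e = 0)] at hv; simp at hv
  | succ s => exact ⟨s, rfl⟩

lemma crux_aux (G' : SimpleGraph (Fin n))
    (hN : ∀ i j : Fin n, G'.Adj i j →
      G'.neighborSet i ∪ G'.neighborSet j = Set.univ)
    {i j : Fin n} (hij : G'.Adj i j) {t : ℕ} {e d : Fin n →₀ ℕ}
    (he : IsESum (t+1) e) (hed : e ≤ d) (hd : edgeVec i j ≤ d) (hi : 1 ≤ e i) :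
    ∃ a b f, G'.Adj a b ∧ IsESum t f ∧ edgeVec a b + f ≤ d := by
  obtain ⟨c, f, hci, hf, rfl⟩ := extract t e he i hi
  by_cases hic : G'.Adj i c
  · exact ⟨i, c, f, hic, hf, hed⟩
  by_cases hcj : c = j
  · exact ⟨i, c, f, by rw [hcj]; exact hij, hf, hed⟩
  have hjc : G'.Adj j c := by
    have hc : c ∈ G'.neighborSet i ∪ G'.neighborSet j := by
      rw [hN i j hij]; exact Set.mem_univ c
    rcases hc with h1 | h2
    · exact absurd h1 hic
    · exact h2
  by_cases hfj : 1 ≤ f j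
  · obtain ⟨s, rfl⟩ := IsESum_nonzero_level hf hfj
    obtain ⟨c', f', hc'j, hf', rfl⟩ := extract s f hf j hfj
    by_cases hc'i : c' = i
    · refine ⟨i, j, edgeVec i c + f', hij, ⟨i, c, f', fun h => hci h.symm, hf', rfl⟩, ?_⟩
      calc edgeVec i j + (edgeVec i c + f')
          = edgeVec i c + (edgeVec j c' + f') := by
            rw [hc'i, edgeVec_comm j i]; abel
        _ ≤ d := hed
    · refine ⟨j, c, edgeVec i c' + f', hjc, ⟨i, c', f', fun h => hc'i h.symm, hf', rfl⟩, ?_⟩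
      calc edgeVec j c + (edgeVec i c' + f')
          = edgeVec i c + (edgeVec j c' + f') := by
            simp only [edgeVec]; abel
        _ ≤ d := hed
  · refine ⟨j, c, f, hjc, hf, ?_⟩
    have hfj0 : f j = 0 := by omega
    intro v
    have h1 : (edgeVec i c + f) v ≤ d v := hed v
    have h2 : edgeVec i j v ≤ d v := hd v
    simp only [Finsupp.add_apply, edgeVec_apply] at h1 h2 ⊢
    by_cases hjv : j = v
    · subst hjv
      simp only [if_pos rfl, if_neg hcj, hfj0] at *
      split_ifs at h1 h2 ⊢ <;> omega
    · simp only [if_neg hjv] at h2 ⊢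
      split_ifs at h1 h2 ⊢ <;> omega

lemma crux (G' : SimpleGraph (Fin n))
    (hN : ∀ i j : Fin n, G'.Adj i j →
      G'.neighborSet i ∪ G'.neighborSet j = Set.univ)
    {i j : Fin n} (hij : G'.Adj i j) {t : ℕ} {e d : Fin n →₀ ℕ}
    (he : IsESum (t+1) e) (hed : e ≤ d) (hd : edgeVec i j ≤ d) :
    ∃ a b f, G'.Adj a b ∧ IsESum t f ∧ edgeVec a b + f ≤ d := by
  by_cases hi : 1 ≤ e i
  · exact crux_aux G' hN hij he hed hd hi
  by_cases hj : 1 ≤ e j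
  · exact crux_aux G' hN hij.symm he hed (edgeVec_comm i j ▸ hd) hj
  obtain ⟨f, hf, hfe⟩ := tail he
  refine ⟨i, j, f, hij, hf, ?_⟩
  have hfi : f i = 0 := by have := hfe i; omega
  have hfj : f j = 0 := by have := hfe j; omega
  intro v
  have h1 : f v ≤ e v := hfe v
  have h2 : e v ≤ d v := hed v
  have h3 : edgeVec i j v ≤ d v := hd v
  simp only [Finsupp.add_apply, edgeVec_apply] at h3 ⊢
  by_cases hiv : i = v
  · subst hiv
    split_ifs at h3 ⊢ <;> omega
  by_cases hjv : j = v
  · subst hjv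
    split_ifs at h3 ⊢ <;> omega
  · simp only [if_neg hiv, if_neg hjv] at h3 ⊢
    omega

variable (K : Type) [Field K]

lemma X_mul_X_eq (i j : Fin n) :
    (X i * X j : MvPolynomial (Fin n) K) = monomial (edgeVec i j) 1 := by
  rw [X, X, monomial_mul, one_mul]; rfl

lemma edgeIdeal_eq (G : SimpleGraph (Fin n)) :
    edgeIdeal K G = Ideal.span
      ((fun s => monomial s (1 : K)) '' {e | ∃ i j, G.Adj i j ∧ e = edgeVec i j}) := by
  unfold edgeIdeal
  congr 1
  ext p
  constructor
  · rintro ⟨i, j, h, rfl⟩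
    exact ⟨edgeVec i j, ⟨i, j, h, rfl⟩, (X_mul_X_eq K i j).symm⟩
  · rintro ⟨e, ⟨i, j, h, rfl⟩, rfl⟩
    exact ⟨i, j, h, (X_mul_X_eq K i j).symm⟩

lemma span_monomial_mul (S T : Set (Fin n →₀ ℕ)) :
    Ideal.span ((fun s => monomial s (1 : K)) '' S) *
      Ideal.span ((fun s => monomial s (1 : K)) '' T) =
    Ideal.span ((fun s => monomial s (1 : K)) '' (S + T)) := by
  rw [Ideal.span_mul_span']
  congr 1
  ext p
  simp only [Set.mem_mul, Set.mem_image, Set.mem_add]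
  constructor
  · rintro ⟨_, ⟨s, hs, rfl⟩, _, ⟨t, ht, rfl⟩, rfl⟩
    exact ⟨s + t, ⟨s, hs, t, ht, rfl⟩, by simp [monomial_mul]⟩
  · rintro ⟨_, ⟨s, hs, t, ht, rfl⟩, rfl⟩
    exact ⟨_, ⟨s, hs, rfl⟩, _, ⟨t, ht, rfl⟩, by simp [monomial_mul]⟩

lemma pow_eq (t : ℕ) :
    (edgeIdeal K (⊤ : SimpleGraph (Fin n))) ^ t =
      Ideal.span ((fun s => monomial s (1 : K)) '' {e | IsESum t e}) := by
  induction t with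
  | zero =>
    have : {e : Fin n →₀ ℕ | IsESum 0 e} = {0} := by
      ext e; simp [IsESum]
    rw [pow_zero, this]
    simp [Ideal.one_eq_top, Ideal.span_singleton_one,
      (by simp : (monomial (0 : Fin n →₀ ℕ) (1 : K)) = 1)]
  | succ s ih =>
    rw [pow_succ, ih, edgeIdeal_eq, span_monomial_mul]
    have hset : {e : Fin n →₀ ℕ | IsESum s e} +
        {e | ∃ i j, (⊤ : SimpleGraph (Fin n)).Adj i j ∧ e = edgeVec i j} =
        {e | IsESum (s + 1) e} := by
      ext e
      simp only [Set.mem_add, Set.mem_setOf_eq]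
      constructor
      · rintro ⟨f, hf, g, ⟨i, j, hij, rfl⟩, rfl⟩
        exact ⟨i, j, f, hij.ne, hf, add_comm _ _⟩
      · rintro ⟨i, j, f, hij, hf, rfl⟩
        exact ⟨f, hf, edgeVec i j, ⟨i, j, by simpa using hij, rfl⟩, add_comm _ _⟩
    rw [hset]

lemma mixed_eq (G' : SimpleGraph (Fin n)) (t : ℕ) :
    edgeIdeal K G' * (edgeIdeal K (⊤ : SimpleGraph (Fin n))) ^ t =
      Ideal.span ((fun s => monomial s (1 : K)) ''
        {e | ∃ a b f, G'.Adj a b ∧ IsESum t f ∧ e = edgeVec a b + f}) := by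
  rw [edgeIdeal_eq, pow_eq, span_monomial_mul]
  have hset : {e : Fin n →₀ ℕ | ∃ i j, G'.Adj i j ∧ e = edgeVec i j} +
      {e : Fin n →₀ ℕ | IsESum t e} =
      {e | ∃ a b f, G'.Adj a b ∧ IsESum t f ∧ e = edgeVec a b + f} := by
    ext e
    simp only [Set.mem_add, Set.mem_setOf_eq]
    constructor
    · rintro ⟨g, ⟨a, b, hab, rfl⟩, f, hf, rfl⟩
      exact ⟨a, b, f, hab, hf, rfl⟩
    · rintro ⟨a, b, f, hab, hf, rfl⟩
      exact ⟨edgeVec a b, ⟨a, b, hab, rfl⟩, f, hf, rfl⟩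
  rw [hset]

lemma no_mixed (G' : SimpleGraph (Fin n)) {i j k a b c c' : Fin n} (hij : G'.Adj i j)
    (hki : ¬G'.Adj i k) (hkj : ¬G'.Adj j k)
    (hab : G'.Adj a b) (hcc' : c ≠ c')
    (hle : edgeVec a b + edgeVec c c' ≤ edgeVec i k + edgeVec j k) : False := by
  have H : ∀ v : Fin n,
      ((if a = v then 1 else 0) + (if b = v then 1 else 0)) +
        ((if c = v then 1 else 0) + (if c' = v then 1 else 0)) ≤
      ((if i = v then 1 else 0) + (if k = v then 1 else 0)) +
        ((if j = v then 1 else 0) + (if k = v then 1 else 0)) := by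
    intro v
    have := hle v
    simpa only [Finsupp.add_apply, edgeVec_apply] using this
  have mem : ∀ x : Fin n, (x = a ∨ x = b ∨ x = c ∨ x = c') → (i = x ∨ j = x ∨ k = x) := by
    intro x hx
    by_contra h
    push_neg at h
    obtain ⟨h1, h2, h3⟩ := h
    have hH := H x
    simp only [if_neg h1, if_neg h2, if_neg h3] at hH
    rcases hx with rfl | rfl | rfl | rfl <;>
      simp only [if_pos rfl] at hH <;> split_ifs at hH <;> omega
  have hak : a ≠ k := by
    rintro rfl
    rcases mem b (Or.inr (Or.inl rfl)) with rfl | rfl | rfl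
    · exact hki hab.symm
    · exact hkj hab.symm
    · exact G'.loopless.irrefl _ hab
  have hbk : b ≠ k := by
    rintro rfl
    rcases mem a (Or.inl rfl) with rfl | rfl | rfl
    · exact hki hab
    · exact hkj hab
    · exact G'.loopless.irrefl _ hab
  -- so {a,b} ⊆ {i,j}
  have ha : i = a ∨ j = a := by
    rcases mem a (Or.inl rfl) with h | h | h
    · exact Or.inl h
    · exact Or.inr h
    · exact absurd h.symm hak
  have hb : i = b ∨ j = b := by
    rcases mem b (Or.inr (Or.inl rfl)) with h | h | h
    · exact Or.inl h
    · exact Or.inr h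
    · exact absurd h.symm hbk
  have hijne : i ≠ j := hij.ne
  have habne : a ≠ b := hab.ne
  -- now show c = k and c' = k
  have hkey : ∀ x : Fin n, (x = c ∨ x = c') → x = k := by
    intro x hx
    rcases mem x (Or.inr (Or.inr hx)) with h | h | h
    · -- x = i : contradiction at coordinate i
      exfalso
      have hH := H i
      have hone : ((if a = i then 1 else 0) + (if b = i then 1 else 0)) = 1 := by
        rcases ha with h1 | h1 <;> rcases hb with h2 | h2 <;>
          first
            | (exact absurd (h1.symm.trans h2) habne)
            | (split_ifs <;> omega)
      rw [hone] at hH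
      have hki' : k ≠ i := fun hh => hkj (by rw [hh]; exact hij.symm)
      simp only [if_pos rfl, if_neg hki', if_neg hijne.symm] at hH
      rcases hx with rfl | rfl <;> simp only [← h, if_pos rfl] at hH <;>
        split_ifs at hH <;> omega
    · -- x = j : contradiction at coordinate j
      exfalso
      have hH := H j
      have hone : ((if a = j then 1 else 0) + (if b = j then 1 else 0)) = 1 := by
        rcases ha with h1 | h1 <;> rcases hb with h2 | h2 <;>
          first
            | (exact absurd (h1.symm.trans h2) habne)
            | (split_ifs <;> omega)
      rw [hone] at hH
      have hkj' : k ≠ j := fun hh => hki (by rw [hh]; exact hij)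
      simp only [if_pos rfl, if_neg hkj', if_neg hijne] at hH
      rcases hx with rfl | rfl <;> simp only [← h, if_pos rfl] at hH <;>
        split_ifs at hH <;> omega
    · exact h.symm
  exact hcc' ((hkey c (Or.inl rfl)).trans (hkey c' (Or.inr rfl)).symm)

/-- Let `G'` be a subgraph of the complete graph `K_n` (i.e. any simple
graph on `[n]`), `J = I(G')` and `I = I(K_n)`.  Then `J ∩ I^t = J·I^{t-1}` for all `t ≥ 1`
iff for every edge `{i,j}` of `G'` one has `N_{G'}(i) ∪ N_{G'}(j) = [n]`. -/
theorem VV_vanishes_iff_neighbors_cover {K : Type} [Field K] {n : ℕ}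
    (G' : SimpleGraph (Fin n)) :
    (∀ t : ℕ, 1 ≤ t →
        edgeIdeal K G' ⊓ (edgeIdeal K (⊤ : SimpleGraph (Fin n))) ^ t =
          edgeIdeal K G' * (edgeIdeal K (⊤ : SimpleGraph (Fin n))) ^ (t - 1)) ↔
      (∀ i j : Fin n, G'.Adj i j →
        G'.neighborSet i ∪ G'.neighborSet j = Set.univ) := by
  constructor
  · intro h i j hij
    by_contra hne
    obtain ⟨k, hk⟩ := (Set.ne_univ_iff_exists_notMem _).mp hne
    simp only [Set.mem_union, SimpleGraph.mem_neighborSet, not_or] at hk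
    obtain ⟨hki, hkj⟩ := hk
    have h2 := h 2 one_le_two
    set d : Fin n →₀ ℕ := edgeVec i k + edgeVec j k with hdd
    have hik : i ≠ k := fun hh => hkj (by rw [← hh]; exact hij.symm)
    have hjk : j ≠ k := fun hh => hki (by rw [← hh]; exact hij)
    have hmem : (monomial d (1 : K)) ∈
        edgeIdeal K G' ⊓ (edgeIdeal K (⊤ : SimpleGraph (Fin n))) ^ 2 := by
      have hsupp : ((monomial d (1 : K))).support = {d} := by
        classical
        rw [support_monomial, if_neg one_ne_zero]
      rw [Ideal.mem_inf, edgeIdeal_eq, pow_eq]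
      constructor <;> rw [mem_ideal_span_monomial_image] <;> intro d' hd' <;>
        rw [hsupp, Finset.mem_singleton] at hd' <;>
        subst hd'
      · refine ⟨edgeVec i j, ⟨i, j, hij, rfl⟩, ?_⟩
        rw [hdd]
        simp only [edgeVec]
        exact add_le_add le_self_add le_self_add
      · exact ⟨d, ⟨i, k, edgeVec j k, hik,
          ⟨j, k, 0, hjk, rfl, (add_zero _).symm⟩, rfl⟩, le_rfl⟩
    rw [h2, show (2 : ℕ) - 1 = 1 from rfl, mixed_eq] at hmem
    rw [mem_ideal_span_monomial_image] at hmem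
    have hsupp : ((monomial d (1 : K))).support = {d} := by
      classical
      rw [support_monomial, if_neg one_ne_zero]
    obtain ⟨e, ⟨a, b, f, hab, hf1, rfl⟩, hle⟩ := hmem d
      (by rw [hsupp]; exact Finset.mem_singleton_self d)
    obtain ⟨c, c', g, hcc', hg, rfl⟩ := hf1
    rw [show g = 0 from hg, add_zero] at hle
    exact no_mixed G' hij hki hkj hab hcc' hle
  · intro hN t ht
    obtain ⟨s, rfl⟩ : ∃ s, t = s + 1 := ⟨t - 1, (Nat.succ_pred_eq_of_pos ht).symm⟩
    rw [Nat.add_sub_cancel, mixed_eq]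
    apply le_antisymm
    · intro p hp
      rw [Ideal.mem_inf, edgeIdeal_eq, pow_eq] at hp
      rw [mem_ideal_span_monomial_image]
      intro d hd
      obtain ⟨eJ, ⟨i, j, hij, rfl⟩, hJd⟩ := (mem_ideal_span_monomial_image.mp hp.1) d hd
      obtain ⟨e, he, hed⟩ := (mem_ideal_span_monomial_image.mp hp.2) d hd
      obtain ⟨a, b, f, hab, hf, hle⟩ := crux G' hN hij he hed hJd
      exact ⟨edgeVec a b + f, ⟨a, b, f, hab, hf, rfl⟩, hle⟩
    · intro p hp
      rw [mem_ideal_span_monomial_image] at hp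
      rw [Ideal.mem_inf, edgeIdeal_eq, pow_eq]
      constructor <;> rw [mem_ideal_span_monomial_image] <;> intro d hd <;>
        obtain ⟨e, ⟨a, b, f, hab, hf, rfl⟩, hle⟩ := hp d hd
      · exact ⟨edgeVec a b, ⟨a, b, hab, rfl⟩, le_trans le_self_add hle⟩
      · exact ⟨edgeVec a b + f, ⟨a, b, f, hab.ne, hf, rfl⟩, hle⟩
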